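/- Let n > 1 be an integer. Then G_n(n) ≢ 0 (mod n) in ℤ[i] if and only if there exists a prime p such that: (i) p ≡ 3 (mod 4), (ii) p³ − p ∣ n, and (iii) p² ∤ n. -/

import Mathlib

open Finset
set_option maxRecDepth 8000

/-- The Gaussian power sum `G_k(n) = ∑_{1 ≤ a, b ≤ n} (a + b·i)^k` in `ℤ[i]`. -/
def Gsum (k n : ℕ) : GaussianInt :=
  ∑ a ∈ Finset.Icc 1 n, ∑ b ∈ Finset.Icc 1 n, (⟨(a : ℤ), (b : ℤ)⟩ : GaussianInt) ^ k

namespace GsumAux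

/-- the Gaussian integer `a + b i` for naturals `a b`. -/
def zz (a b : ℕ) : GaussianInt := ⟨(a : ℤ), (b : ℤ)⟩

/-- double power sum over `range m`. -/
def Tsum (m k : ℕ) : GaussianInt :=
  ∑ a ∈ Finset.range m, ∑ b ∈ Finset.range m, zz a b ^ k

lemma gdvd (m : ℕ) (z : GaussianInt) :
    (m : GaussianInt) ∣ z ↔ (m : ℤ) ∣ z.re ∧ (m : ℤ) ∣ z.im := by
  have h := Zsqrtd.intCast_dvd (d := -1) (m : ℤ) z
  rwa [Int.cast_natCast] at h

lemma dvd_pow_sub_pow {M x y : GaussianInt} (h : M ∣ x - y) (k : ℕ) :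
    M ∣ x ^ k - y ^ k :=
  h.trans (sub_dvd_pow_sub_pow x y k)

lemma dvd_iff_of_dvd_sub {M A B : GaussianInt} (h : M ∣ A - B) : M ∣ A ↔ M ∣ B := by
  constructor
  · intro hA
    have := hA.sub h
    rwa [sub_sub_cancel] at this
  · intro hB
    have := h.add hB
    rwa [sub_add_cancel] at this

lemma binom_aux {R : Type*} [CommRing R] (z x : R) (k : ℕ) :
    x ^ 2 ∣ (z + x) ^ (k + 1) - z ^ (k + 1) - ((k : R) + 1) * z ^ k * x := by
  induction k with
  | zero =>
    convert dvd_zero (x ^ 2) using 1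
    push_cast
    ring
  | succ k ih =>
    have key : (z + x) ^ (k + 1 + 1) - z ^ (k + 1 + 1) - (((k : R) + 1) + 1) * z ^ (k + 1) * x
        = (z + x) * ((z + x) ^ (k + 1) - z ^ (k + 1) - ((k : R) + 1) * z ^ k * x)
          + (((k : R) + 1) * z ^ k) * x ^ 2 := by ring
    push_cast
    rw [key]
    exact dvd_add (ih.mul_left _) (dvd_mul_left _ _)

lemma sum_range_mul {M : Type*} [AddCommMonoid M] (f : ℕ → M) (c m : ℕ) :
    ∑ a ∈ range (c * m), f a = ∑ s ∈ range c, ∑ r ∈ range m, f (s * m + r) := by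
  induction c with
  | zero => simp
  | succ c ih =>
    have hsplit : ∑ a ∈ range (c * m + m), f a
        = ∑ a ∈ range (c * m), f a + ∑ i ∈ range m, f (c * m + i) := by
      rw [Finset.range_eq_Ico,
        ← Finset.sum_Ico_consecutive f (Nat.zero_le (c * m)) (Nat.le_add_right (c * m) m),
        Finset.sum_Ico_eq_sum_range]
      simp [Finset.sum_Ico_eq_sum_range]
    rw [Nat.succ_mul, hsplit, ih, Finset.sum_range_succ]

lemma pair_decomp (P s r t u : ℕ) :
    zz (s * P + r) (t * P + u) = zz r u + (P : GaussianInt) * zz s t := by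
  have h : (P : GaussianInt) = ((P : ℤ) : GaussianInt) := by push_cast; rfl
  rw [zz, zz, zz, h, Zsqrtd.smul_val, Zsqrtd.ext_iff]
  constructor <;> · simp; push_cast; ring


lemma nested_eq (c m : ℕ) (g : ℕ → ℕ → GaussianInt) :
    ∑ _s ∈ range c, ∑ _t ∈ range c, ∑ r ∈ range m, ∑ u ∈ range m, g r u
      = (c : GaussianInt) ^ 2 * ∑ r ∈ range m, ∑ u ∈ range m, g r u := by
  simp only [Finset.sum_const, Finset.card_range, smul_smul, nsmul_eq_mul]
  push_cast
  ring

/-- the quadruple-sum presentation of `Tsum (c*m) k`, in order (s,t,r,u). -/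
lemma Tsum_quad (c m k : ℕ) :
    Tsum (c * m) k = ∑ s ∈ range c, ∑ t ∈ range c, ∑ r ∈ range m, ∑ u ∈ range m,
      (zz r u + (m : GaussianInt) * zz s t) ^ k := by
  unfold Tsum
  rw [sum_range_mul (fun a => ∑ b ∈ range (c * m), zz a b ^ k) c m]
  refine Finset.sum_congr rfl fun s _ => ?_
  have key : ∀ r : ℕ, (∑ b ∈ range (c * m), zz (s * m + r) b ^ k)
      = ∑ t ∈ range c, ∑ u ∈ range m,
        (zz r u + (m : GaussianInt) * zz s t) ^ k := by
    intro r
    rw [sum_range_mul (fun b => zz (s * m + r) b ^ k) c m]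
    refine Finset.sum_congr rfl fun t _ => Finset.sum_congr rfl fun u _ => ?_
    rw [show ∀ x y : ℕ, zz (s * m + x) (t * m + y) = zz x y + (m : GaussianInt) * zz s t from fun x y => pair_decomp m s x t y]
  rw [Finset.sum_congr rfl fun r _ => key r]
  exact Finset.sum_comm


lemma Tsum_cover (m c k : ℕ) :
    (m : GaussianInt) ∣ Tsum (c * m) k - (c : GaussianInt) ^ 2 * Tsum m k := by
  rw [Tsum_quad]
  have h2 : (c : GaussianInt) ^ 2 * Tsum m k
      = ∑ _s ∈ range c, ∑ _t ∈ range c, ∑ r ∈ range m, ∑ u ∈ range m,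
        zz r u ^ k := (nested_eq c m _).symm
  rw [h2]
  simp only [← Finset.sum_sub_distrib]
  refine Finset.dvd_sum fun s _ => Finset.dvd_sum fun t _ => Finset.dvd_sum fun r _ =>
    Finset.dvd_sum fun u _ => ?_
  apply dvd_pow_sub_pow _ k
  rw [add_sub_cancel_left]
  exact Dvd.intro _ rfl

/-- sum of the pairs ⟨s,t⟩ over a square is divisible by the side length. -/
lemma sum_pairs_dvd (p : ℕ) :
    (p : GaussianInt) ∣ ∑ s ∈ range p, ∑ t ∈ range p, zz s t := by
  have hrepr : ∀ s t : ℕ, zz s t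
      = ((s : ℤ) : GaussianInt) + ((t : ℤ) : GaussianInt) * ⟨0, 1⟩ := by
    intro s t
    rw [zz, Zsqrtd.ext_iff]
    constructor <;> simp
  simp only [hrepr, Finset.sum_add_distrib, Finset.sum_const, Finset.card_range,
    ← Finset.sum_mul]
  simp only [nsmul_eq_mul, ← Finset.mul_sum]
  exact dvd_add (dvd_mul_right _ _) (dvd_mul_right _ _)


lemma Tsum_lift (p e k : ℕ) (he : 1 ≤ e) :
    (p : GaussianInt) ^ (e + 1) ∣
      Tsum (p * p ^ e) (k + 1) - (p : GaussianInt) ^ 2 * Tsum (p ^ e) (k + 1) := by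
  have hM : ((p ^ e : ℕ) : GaussianInt) = (p : GaussianInt) ^ e := by push_cast; rfl
  rw [Tsum_quad p (p ^ e) (k + 1),
    show (p : GaussianInt) ^ 2 * Tsum (p ^ e) (k + 1)
      = ∑ _s ∈ range p, ∑ _t ∈ range p, ∑ r ∈ range (p ^ e), ∑ u ∈ range (p ^ e),
          zz r u ^ (k + 1) from (nested_eq p (p ^ e) _).symm]
  simp only [← Finset.sum_sub_distrib]
  suffices h : (p : GaussianInt) ^ (e + 1) ∣
      (∑ s ∈ range p, ∑ t ∈ range p, ∑ r ∈ range (p ^ e), ∑ u ∈ range (p ^ e),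
        ((zz r u + ((p ^ e : ℕ) : GaussianInt) * zz s t) ^ (k + 1) - zz r u ^ (k + 1)
          - ((k : GaussianInt) + 1) * zz r u ^ k * (((p ^ e : ℕ) : GaussianInt) * zz s t)))
      + (∑ s ∈ range p, ∑ t ∈ range p, ∑ r ∈ range (p ^ e), ∑ u ∈ range (p ^ e),
        (((k : GaussianInt) + 1) * zz r u ^ k * ((p ^ e : ℕ) : GaussianInt)) * zz s t) by
    have heq : (∑ s ∈ range p, ∑ t ∈ range p, ∑ r ∈ range (p ^ e), ∑ u ∈ range (p ^ e),
        ((zz r u + ((p ^ e : ℕ) : GaussianInt) * zz s t) ^ (k + 1) - zz r u ^ (k + 1)))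
        = (∑ s ∈ range p, ∑ t ∈ range p, ∑ r ∈ range (p ^ e), ∑ u ∈ range (p ^ e),
          ((zz r u + ((p ^ e : ℕ) : GaussianInt) * zz s t) ^ (k + 1) - zz r u ^ (k + 1)
            - ((k : GaussianInt) + 1) * zz r u ^ k * (((p ^ e : ℕ) : GaussianInt) * zz s t)))
        + (∑ s ∈ range p, ∑ t ∈ range p, ∑ r ∈ range (p ^ e), ∑ u ∈ range (p ^ e),
          (((k : GaussianInt) + 1) * zz r u ^ k * ((p ^ e : ℕ) : GaussianInt)) * zz s t) := by
      simp only [← Finset.sum_add_distrib]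
      refine Finset.sum_congr rfl fun s _ => Finset.sum_congr rfl fun t _ =>
        Finset.sum_congr rfl fun r _ => Finset.sum_congr rfl fun u _ => ?_
      ring
    rw [heq]; exact h
  apply dvd_add
  · refine Finset.dvd_sum fun s _ => Finset.dvd_sum fun t _ => Finset.dvd_sum fun r _ =>
      Finset.dvd_sum fun u _ => ?_
    have hb := binom_aux (zz r u) (((p ^ e : ℕ) : GaussianInt) * zz s t) k
    refine dvd_trans (dvd_trans (pow_dvd_pow (p : GaussianInt) (by omega : e + 1 ≤ 2 * e)) ?_) hb
    rw [mul_pow, hM, ← pow_mul, mul_comm e 2]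
    exact Dvd.intro _ rfl
  · have hfac : ∀ s t : ℕ,
        ∑ r ∈ range (p ^ e), ∑ u ∈ range (p ^ e),
            (((k : GaussianInt) + 1) * zz r u ^ k * ((p ^ e : ℕ) : GaussianInt)) * zz s t
          = (∑ r ∈ range (p ^ e), ∑ u ∈ range (p ^ e),
              ((k : GaussianInt) + 1) * zz r u ^ k * ((p ^ e : ℕ) : GaussianInt)) * zz s t := by
      intro s t; simp only [Finset.sum_mul]
    simp only [hfac]
    have hout : ∑ s ∈ range p, ∑ t ∈ range p,
        (∑ r ∈ range (p ^ e), ∑ u ∈ range (p ^ e),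
          ((k : GaussianInt) + 1) * zz r u ^ k * ((p ^ e : ℕ) : GaussianInt)) * zz s t
        = (∑ r ∈ range (p ^ e), ∑ u ∈ range (p ^ e),
            ((k : GaussianInt) + 1) * zz r u ^ k * ((p ^ e : ℕ) : GaussianInt))
          * ∑ s ∈ range p, ∑ t ∈ range p, zz s t := by
      simp only [← Finset.mul_sum]
    rw [hout]
    have hDfac : (∑ r ∈ range (p ^ e), ∑ u ∈ range (p ^ e),
        ((k : GaussianInt) + 1) * zz r u ^ k * ((p ^ e : ℕ) : GaussianInt))
        = (∑ r ∈ range (p ^ e), ∑ u ∈ range (p ^ e),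
            ((k : GaussianInt) + 1) * zz r u ^ k) * ((p ^ e : ℕ) : GaussianInt) := by
      simp only [Finset.sum_mul]
    obtain ⟨S', hS'⟩ := sum_pairs_dvd p
    rw [hDfac, hS', hM]
    exact ⟨(∑ r ∈ range (p ^ e), ∑ u ∈ range (p ^ e),
      ((k : GaussianInt) + 1) * zz r u ^ k) * S', by ring⟩

lemma Tsum_iter (p k : ℕ) :
    ∀ e : ℕ, (p : GaussianInt) ^ (e + 1) ∣
      Tsum (p ^ (e + 1)) (k + 1) - (p : GaussianInt) ^ (2 * e) * Tsum p (k + 1) := by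
  intro e
  induction e with
  | zero => simp
  | succ e ih =>
    have h1 := Tsum_lift p (e + 1) k (by omega)
    have heq : Tsum (p ^ (e + 1 + 1)) (k + 1)
          - (p : GaussianInt) ^ (2 * (e + 1)) * Tsum p (k + 1)
        = (Tsum (p * p ^ (e + 1)) (k + 1)
            - (p : GaussianInt) ^ 2 * Tsum (p ^ (e + 1)) (k + 1))
          + (p : GaussianInt) ^ 2 *
            (Tsum (p ^ (e + 1)) (k + 1) - (p : GaussianInt) ^ (2 * e) * Tsum p (k + 1)) := by
      rw [show p ^ (e + 1 + 1) = p * p ^ (e + 1) from by ring]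
      ring
    rw [heq]
    refine dvd_add h1 ?_
    rw [show e + 1 + 1 = 1 + (e + 1) from by omega, pow_add]
    exact mul_dvd_mul (pow_dvd_pow _ (by omega)) ih

lemma Tsum_dvd_of_two_le (p k e : ℕ) (he : 2 ≤ e) :
    (p : GaussianInt) ^ e ∣ Tsum (p ^ e) (k + 1) := by
  obtain ⟨e', rfl⟩ : ∃ e', e = e' + 1 := ⟨e - 1, by omega⟩
  have h := Tsum_iter p k e'
  have h2 : (p : GaussianInt) ^ (e' + 1) ∣
      (p : GaussianInt) ^ (2 * e') * Tsum p (k + 1) :=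
    Dvd.dvd.mul_right (pow_dvd_pow _ (by omega)) _
  have := h.add h2
  rwa [sub_add_cancel] at this


lemma icc_shift (m : ℕ) (hm : 1 ≤ m) (f : ℕ → GaussianInt) :
    ∑ a ∈ Icc 1 m, f a = (∑ a ∈ range m, f a) + (f m - f 0) := by
  have h1 : ∑ a ∈ Icc 1 m, f a = ∑ i ∈ range m, f (1 + i) := by
    rw [← Finset.Ico_add_one_right_eq_Icc, Finset.sum_Ico_eq_sum_range]
    simp
  have h2 := Finset.sum_range_succ' f m
  have h3 := Finset.sum_range_succ f m
  have h4 : ∑ i ∈ range m, f (1 + i) = ∑ i ∈ range m, f (i + 1) :=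
    Finset.sum_congr rfl fun i _ => by rw [Nat.add_comm]
  rw [h1, h4]
  have h5 := h2.symm.trans h3
  linear_combination h5

lemma icc_congr (m : ℕ) (hm : 1 ≤ m) (f : ℕ → GaussianInt)
    (h : (m : GaussianInt) ∣ f m - f 0) :
    (m : GaussianInt) ∣ (∑ a ∈ Icc 1 m, f a) - ∑ a ∈ range m, f a := by
  rw [icc_shift m hm f]
  simpa using h

lemma Gsum_sub_Tsum (n : ℕ) (hn : 1 ≤ n) :
    (n : GaussianInt) ∣ Gsum n n - Tsum n n := by
  have hzz : ∀ a b : ℕ, (⟨(a : ℤ), (b : ℤ)⟩ : GaussianInt) = zz a b := fun _ _ => rfl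
  have hzre : ∀ a b : ℕ, (zz a b).re = (a : ℤ) := fun _ _ => rfl
  have hzim : ∀ a b : ℕ, (zz a b).im = (b : ℤ) := fun _ _ => rfl
  have key1 : ∀ a : ℕ, (n : GaussianInt) ∣
      (∑ b ∈ Icc 1 n, zz a b ^ n) - ∑ b ∈ range n, zz a b ^ n := by
    intro a
    refine icc_congr n hn _ (dvd_pow_sub_pow ?_ n)
    rw [gdvd]
    constructor
    · simp [Zsqrtd.re_sub, hzre]
    · simp [Zsqrtd.im_sub, hzim]
  have key2 : (n : GaussianInt) ∣
      (∑ a ∈ Icc 1 n, ∑ b ∈ Icc 1 n, zz a b ^ n)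
        - ∑ a ∈ range n, ∑ b ∈ Icc 1 n, zz a b ^ n := by
    refine icc_congr n hn _ ?_
    rw [← Finset.sum_sub_distrib]
    refine Finset.dvd_sum fun b _ => dvd_pow_sub_pow ?_ n
    rw [gdvd]
    constructor
    · simp [Zsqrtd.re_sub, hzre]
    · simp [Zsqrtd.im_sub, hzim]
  have key3 : (n : GaussianInt) ∣
      (∑ a ∈ range n, ∑ b ∈ Icc 1 n, zz a b ^ n) - Tsum n n := by
    unfold Tsum
    rw [← Finset.sum_sub_distrib]
    exact Finset.dvd_sum fun a _ => key1 a
  have h := key2.add key3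
  rwa [sub_add_sub_cancel, show (∑ a ∈ Icc 1 n, ∑ b ∈ Icc 1 n, zz a b ^ n) = Gsum n n from by
    unfold Gsum; simp only [hzz]] at h

lemma dvd_Gsum_iff (n : ℕ) (hn : 1 ≤ n) :
    (n : GaussianInt) ∣ Gsum n n ↔ (n : GaussianInt) ∣ Tsum n n :=
  dvd_iff_of_dvd_sub (Gsum_sub_Tsum n hn)


@[simp] lemma zz_re (a b : ℕ) : (zz a b).re = (a : ℤ) := rfl
@[simp] lemma zz_im (a b : ℕ) : (zz a b).im = (b : ℤ) := rfl

lemma sum_range_cast {p : ℕ} [NeZero p] {M : Type*} [AddCommMonoid M] (f : ZMod p → M) :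
    ∑ a ∈ range p, f ((a : ℕ) : ZMod p) = ∑ x : ZMod p, f x := by
  refine Finset.sum_nbij' (fun a => ((a : ZMod p))) (fun x => x.val) (fun a _ => mem_univ _)
    (fun x _ => mem_range.2 (ZMod.val_lt x)) (fun a ha => ?_) (fun x _ => ?_) (fun a _ => rfl)
  · exact ZMod.val_cast_of_lt (mem_range.1 ha)
  · exact ZMod.natCast_rightInverse x

lemma hom_Tsum {R : Type*} [CommRing R] (φ : GaussianInt →+* R) (m k : ℕ) :
    φ (Tsum m k)
      = ∑ a ∈ range m, ∑ b ∈ range m,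
          ((a : R) + (b : R) * φ (⟨0, 1⟩ : GaussianInt)) ^ k := by
  unfold Tsum
  rw [map_sum]
  refine Finset.sum_congr rfl fun a _ => ?_
  rw [map_sum]
  refine Finset.sum_congr rfl fun b _ => ?_
  rw [map_pow]
  congr 1
  have hz : zz a b = ((a : ℕ) : GaussianInt) + ((b : ℕ) : GaussianInt) * ⟨0, 1⟩ := by
    rw [zz, Zsqrtd.ext_iff]; constructor <;> simp
  rw [hz, map_add, map_mul, map_natCast, map_natCast]

lemma dvd_Tsum_of_sq_eq_neg_one {p : ℕ} [hFact : Fact p.Prime] (hp2 : p ≠ 2)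
    (c : ZMod p) (hc : c * c = -1) (k : ℕ) : (p : GaussianInt) ∣ Tsum p k := by
  haveI : NeZero p := ⟨hFact.out.ne_zero⟩
  have key : ∀ d : ZMod p, d * d = -1 →
      ((Tsum p k).re : ZMod p) + ((Tsum p k).im : ZMod p) * d = 0 := by
    intro d hd
    have hd' : d * d = ((-1 : ℤ) : ZMod p) := by push_cast; exact hd
    let φ : GaussianInt →+* ZMod p := Zsqrtd.lift ⟨d, hd'⟩
    have hI : φ (⟨0, 1⟩ : GaussianInt) = d := by
      show (0 : ℤ) + (1 : ℤ) * d = d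
      push_cast; ring
    have h0 := hom_Tsum φ p k
    rw [hI] at h0
    have hval : φ (Tsum p k)
        = ((Tsum p k).re : ZMod p) + ((Tsum p k).im : ZMod p) * d := by
      show ((Tsum p k).re : ZMod p) + ((Tsum p k).im : ZMod p) * d = _
      rfl
    rw [← hval, h0]
    calc ∑ a ∈ range p, ∑ b ∈ range p, ((a : ZMod p) + (b : ZMod p) * d) ^ k
        = ∑ b ∈ range p, ∑ a ∈ range p, ((a : ZMod p) + (b : ZMod p) * d) ^ k :=
          Finset.sum_comm
      _ = ∑ b ∈ range p, ∑ x : ZMod p, (x + (b : ZMod p) * d) ^ k := by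
          refine Finset.sum_congr rfl fun b _ => ?_
          exact sum_range_cast (fun x => (x + (b : ZMod p) * d) ^ k)
      _ = ∑ b ∈ range p, ∑ x : ZMod p, x ^ k := by
          refine Finset.sum_congr rfl fun b _ => ?_
          exact Fintype.sum_equiv (Equiv.addRight ((b : ZMod p) * d)) _ _ (fun x => rfl)
      _ = 0 := by
          rw [Finset.sum_const, Finset.card_range, nsmul_eq_mul, ZMod.natCast_self, zero_mul]
  have h1 := key c hc
  have h2 := key (-c) (by rw [neg_mul_neg]; exact hc)
  have h2ne : (2 : ZMod p) ≠ 0 := by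
    intro h
    have h' : ((2 : ℕ) : ZMod p) = 0 := by exact_mod_cast h
    have := (ZMod.natCast_eq_zero_iff 2 p).1 h'
    exact hp2 ((Nat.prime_dvd_prime_iff_eq hFact.out Nat.prime_two).1 this)
  have hre : ((Tsum p k).re : ZMod p) = 0 := by
    have hsum : (2 : ZMod p) * ((Tsum p k).re : ZMod p) = 0 := by linear_combination h1 + h2
    rcases mul_eq_zero.1 hsum with h | h
    · exact absurd h h2ne
    · exact h
  have hcne : c ≠ 0 := by
    intro h
    rw [h, mul_zero] at hc
    have : (-1 : ZMod p) ≠ 0 := by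
      simp
    exact this hc.symm
  have him : ((Tsum p k).im : ZMod p) = 0 := by
    have : ((Tsum p k).im : ZMod p) * c = 0 := by linear_combination h1 - hre
    rcases mul_eq_zero.1 this with h | h
    · exact h
    · exact absurd h hcne
  rw [gdvd]
  constructor <;> rwa [← ZMod.intCast_zmod_eq_zero_iff_dvd]


lemma case_two (m : ℕ) (hm : 1 ≤ m) : (2 : GaussianInt) ∣ Tsum 2 (2 * m) := by
  have hT : Tsum 2 (2 * m) = zz 0 0 ^ (2 * m) + zz 0 1 ^ (2 * m)
      + (zz 1 0 ^ (2 * m) + zz 1 1 ^ (2 * m)) := by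
    unfold Tsum
    rw [Finset.sum_range_succ, Finset.sum_range_one, Finset.sum_range_succ,
      Finset.sum_range_one, Finset.sum_range_succ, Finset.sum_range_one]
  have e00 : zz 0 0 = 0 := by rw [zz, Zsqrtd.ext_iff]; constructor <;> simp
  have h00 : zz 0 0 ^ (2 * m) = 0 := by rw [e00, zero_pow (by omega)]
  have h10 : zz 1 0 = 1 := by rw [zz, Zsqrtd.ext_iff]; constructor <;> simp
  have hI2 : zz 0 1 ^ 2 = -1 := by
    rw [zz, pow_two, Zsqrtd.ext_iff]
    constructor <;> simp [Zsqrtd.re_mul, Zsqrtd.im_mul]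
  have h11 : zz 1 1 ^ 2 = 2 * zz 0 1 := by
    rw [zz, zz, pow_two, Zsqrtd.ext_iff]
    constructor <;> · simp [Zsqrtd.re_mul, Zsqrtd.im_mul]
  have hI : zz 0 1 ^ (2 * m) = (-1 : GaussianInt) ^ m := by
    rw [pow_mul, hI2]
  have h11' : zz 1 1 ^ (2 * m) = (2 * zz 0 1) ^ m := by
    rw [pow_mul, h11]
  rw [hT, h00, h10, one_pow, hI, h11']
  have hd : (2 : GaussianInt) ∣ (2 * zz 0 1) ^ m := by
    obtain ⟨m', rfl⟩ : ∃ m', m = m' + 1 := ⟨m - 1, by omega⟩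
    rw [pow_succ]
    exact Dvd.dvd.mul_left (dvd_mul_right 2 _) _
  rcases Nat.even_or_odd m with hev | hod
  · rw [hev.neg_one_pow]
    have : (0 : GaussianInt) + 1 + (1 + (2 * zz 0 1) ^ m)
        = 2 + (2 * zz 0 1) ^ m := by ring
    rw [this]
    exact dvd_add dvd_rfl hd
  · rw [hod.neg_one_pow]
    have : (0 : GaussianInt) + -1 + (1 + (2 * zz 0 1) ^ m) = (2 * zz 0 1) ^ m := by ring
    rw [this]
    exact hd


lemma case_three {p : ℕ} [hFact : Fact p.Prime] (hp3 : p % 4 = 3) (k : ℕ) (hk : 1 ≤ k) :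
    ((p : GaussianInt) ∣ Tsum p k ↔ ¬ (p ^ 2 - 1) ∣ k) := by
  haveI : NeZero p := ⟨hFact.out.ne_zero⟩
  classical
  haveI : Fintype (GaloisField p 2) := Fintype.ofFinite _
  set F := GaloisField p 2 with hF
  have hcard : Fintype.card F = p ^ 2 := by
    rw [← Nat.card_eq_fintype_card]
    exact GaloisField.card p 2 two_ne_zero
  have hcard4 : Fintype.card F % 4 ≠ 3 := by
    rw [hcard]
    obtain ⟨q, rfl⟩ : ∃ q, p = 4 * q + 3 := ⟨p / 4, by omega⟩
    have hsq : (4 * q + 3) ^ 2 = 4 * (4 * q * q + 6 * q + 2) + 1 := by ring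
    rw [hsq]
    omega
  obtain ⟨c, hc⟩ : ∃ c : F, c * c = -1 := by
    obtain ⟨c, hc⟩ := (FiniteField.isSquare_neg_one_iff (F := F)).2 hcard4
    exact ⟨c, hc.symm⟩
  set ψ : ZMod p →+* F := ZMod.castHom dvd_rfl F with hψ
  have hψinj : Function.Injective ψ := ψ.injective
  have key0 : ∀ x y : ZMod p, ψ x + ψ y * c = 0 → x = 0 ∧ y = 0 := by
    intro x y h
    by_cases hy : y = 0
    · subst hy
      rw [map_zero, zero_mul, add_zero] at h
      exact ⟨hψinj (by rw [h, map_zero]), rfl⟩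
    · exfalso
      have hyF : ψ y ≠ 0 := fun h0 => hy (hψinj (by rw [h0, map_zero]))
      have hc' : c = ψ (-x / y) := by
        rw [map_div₀, map_neg]
        rw [eq_div_iff hyF]
        linear_combination h
      have hsq : IsSquare (-1 : ZMod p) := by
        refine ⟨-x / y, ?_⟩
        have h1 : ψ ((-x / y) * (-x / y)) = ψ (-1) := by
          rw [map_mul, ← hc', hc, map_neg, map_one]
        exact (hψinj h1).symm
      rw [ZMod.exists_sq_eq_neg_one_iff] at hsq
      exact hsq hp3
  have keyInt : ∀ z : GaussianInt,
      ((z.re : F) + (z.im : F) * c = 0) → (p : ℤ) ∣ z.re ∧ (p : ℤ) ∣ z.im := by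
    intro z h
    have h1 : ψ ((z.re : ZMod p)) + ψ ((z.im : ZMod p)) * c = 0 := by
      rw [map_intCast ψ, map_intCast ψ]
      exact h
    obtain ⟨hx, hy⟩ := key0 _ _ h1
    constructor <;> rwa [← ZMod.intCast_zmod_eq_zero_iff_dvd]
  have hc' : c * c = ((-1 : ℤ) : F) := by push_cast; exact hc
  let φ : GaussianInt →+* F := Zsqrtd.lift ⟨c, hc'⟩
  have hφ : ∀ z : GaussianInt, φ z = (z.re : F) + (z.im : F) * c := fun z => rfl
  have hdvd_iff : (p : GaussianInt) ∣ Tsum p k ↔ φ (Tsum p k) = 0 := by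
    constructor
    · intro hdv
      obtain ⟨q, hq⟩ := hdv
      rw [hq, map_mul, map_natCast, CharP.cast_eq_zero F p, zero_mul]
    · intro h0
      rw [gdvd]
      exact keyInt _ (by rw [← hφ]; exact h0)
  have hbij : Function.Bijective
      (fun xy : ZMod p × ZMod p => ψ xy.1 + ψ xy.2 * c) := by
    rw [Fintype.bijective_iff_injective_and_card]
    constructor
    · intro a b hab
      have hd : ψ (a.1 - b.1) + ψ (a.2 - b.2) * c = 0 := by
        rw [map_sub, map_sub]
        linear_combination hab
      obtain ⟨h1, h2⟩ := key0 _ _ hd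
      exact Prod.ext (sub_eq_zero.1 h1) (sub_eq_zero.1 h2)
    · rw [Fintype.card_prod, ZMod.card, hcard]
      ring
  have hI : φ (⟨0, 1⟩ : GaussianInt) = c := by
    show ((0 : ℤ) : F) + ((1 : ℤ) : F) * c = c
    push_cast; ring
  have hsum : φ (Tsum p k) = ∑ z : F, z ^ k := by
    rw [hom_Tsum φ p k, hI]
    have hcast : ∀ a : ℕ, (a : F) = ψ ((a : ZMod p)) := fun a => (map_natCast ψ a).symm
    calc ∑ a ∈ range p, ∑ b ∈ range p, ((a : F) + (b : F) * c) ^ k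
        = ∑ a ∈ range p, ∑ b ∈ range p,
            (ψ ((a : ZMod p)) + ψ ((b : ZMod p)) * c) ^ k := by
          refine Finset.sum_congr rfl fun a _ => Finset.sum_congr rfl fun b _ => ?_
          rw [← hcast, ← hcast]
      _ = ∑ x : ZMod p, ∑ y : ZMod p, (ψ x + ψ y * c) ^ k := by
          rw [sum_range_cast (fun x => ∑ b ∈ range p, (ψ x + ψ ((b : ZMod p)) * c) ^ k)]
          exact Finset.sum_congr rfl fun x _ =>
            sum_range_cast (fun y => (ψ x + ψ y * c) ^ k)
      _ = ∑ xy : ZMod p × ZMod p, (ψ xy.1 + ψ xy.2 * c) ^ k := by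
          rw [Fintype.sum_prod_type]
      _ = ∑ z : F, z ^ k :=
          Fintype.sum_bijective _ hbij _ _ (fun x => rfl)
  have hq : ∑ z : F, z ^ k = if (p ^ 2 - 1) ∣ k then (-1 : F) else 0 := by
    have hu := FiniteField.sum_pow_units F k
    have hmap : (Finset.univ.map ⟨(Units.val : Fˣ → F), Units.val_injective⟩)
        = Finset.univ \ {0} := by
      ext x
      simp only [Finset.mem_map, Finset.mem_univ, Function.Embedding.coeFn_mk, true_and,
        Finset.mem_sdiff, Finset.mem_singleton]
      constructor
      · rintro ⟨u, rfl⟩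
        exact u.ne_zero
      · intro hx
        exact ⟨Units.mk0 x hx, rfl⟩
    have hsplit : ∑ z : F, z ^ k = ∑ x : Fˣ, ((x : F)) ^ k := by
      calc ∑ z : F, z ^ k = ∑ z ∈ Finset.univ \ {0}, z ^ k := by
            rw [Finset.sdiff_singleton_eq_erase]
            exact (Finset.sum_erase (f := fun z : F => z ^ k) (a := (0 : F)) Finset.univ
              (zero_pow (by omega : k ≠ 0))).symm
        _ = ∑ x ∈ Finset.univ.map ⟨(Units.val : Fˣ → F), Units.val_injective⟩, x ^ k := by rw [hmap]
        _ = ∑ x : Fˣ, ((x : F)) ^ k := Finset.sum_map _ _ _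
    rw [hsplit, hu, hcard]
  rw [hdvd_iff, hsum, hq]
  split_ifs with h
  · simp only [iff_false, h, not_true_eq_false]
    simpa using (by exact neg_ne_zero.2 (one_ne_zero) : (-1 : F) ≠ 0)
  · simp [h]


lemma isCoprime_gauss {a b : ℕ} (h : Nat.Coprime a b) :
    IsCoprime (a : GaussianInt) (b : GaussianInt) := by
  have h1 : IsCoprime (a : ℤ) (b : ℤ) := Nat.isCoprime_iff_coprime.2 h
  have h2 := h1.map (Int.castRingHom GaussianInt)
  simpa using h2

lemma prod_pow_dvd : ∀ S : Finset ℕ, (∀ q ∈ S, Nat.Prime q) → ∀ (E : ℕ → ℕ) (x : GaussianInt),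
    (∀ q ∈ S, (q : GaussianInt) ^ E q ∣ x) → (∏ q ∈ S, (q : GaussianInt) ^ E q) ∣ x := by
  intro S
  classical
  induction S using Finset.induction_on with
  | empty => intro _ E x _; simpa using one_dvd x
  | @insert a s ha ih =>
    intro hS E x h
    rw [Finset.prod_insert ha]
    have hcop : IsCoprime ((a : GaussianInt) ^ E a) (∏ q ∈ s, (q : GaussianInt) ^ E q) := by
      apply IsCoprime.pow_left
      apply IsCoprime.prod_right
      intro q hq
      have hne : a ≠ q := by rintro rfl; exact ha hq
      exact (isCoprime_gauss ((Nat.coprime_primes (hS a (Finset.mem_insert_self a s))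
        (hS q (Finset.mem_insert_of_mem hq))).2 hne)).pow_right
    exact hcop.mul_dvd (h a (Finset.mem_insert_self a s))
      (ih (fun q hq => hS q (Finset.mem_insert_of_mem hq)) E x
        (fun q hq => h q (Finset.mem_insert_of_mem hq)))

lemma dvd_iff_forall_primePow (n : ℕ) (hn0 : n ≠ 0) (x : GaussianInt) :
    (n : GaussianInt) ∣ x ↔
      ∀ p ∈ n.primeFactors, (p : GaussianInt) ^ n.factorization p ∣ x := by
  constructor
  · intro h p hp
    have hd : p ^ n.factorization p ∣ n := Nat.ordProj_dvd n p
    have hcast : ((p ^ n.factorization p : ℕ) : GaussianInt) ∣ (n : GaussianInt) :=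
      Nat.cast_dvd_cast hd
    push_cast at hcast
    exact hcast.trans h
  · intro h
    have h1 : (n.factorization.prod fun p k => p ^ k) = n :=
      Nat.factorization_prod_pow_eq_self hn0
    have h2 : (n.factorization.prod fun p k => p ^ k)
        = ∏ p ∈ n.primeFactors, p ^ n.factorization p := by
      rw [Finsupp.prod, Nat.support_factorization]
    have heq : (n : GaussianInt)
        = ∏ p ∈ n.primeFactors, (p : GaussianInt) ^ n.factorization p := by
      conv_lhs => rw [← h1, h2]
      push_cast
      rfl
    rw [heq]
    exact prod_pow_dvd _ (fun q hq => Nat.prime_of_mem_primeFactors hq) _ x h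

lemma component_iff (n p : ℕ) (hn : 2 ≤ n) (hp : p.Prime) (hpn : p ∣ n) :
    ((p : GaussianInt) ^ n.factorization p ∣ Tsum n n ↔
      ¬ (p % 4 = 3 ∧ n.factorization p = 1 ∧ (p ^ 2 - 1) ∣ n)) := by
  have hn0 : n ≠ 0 := by omega
  haveI : Fact p.Prime := ⟨hp⟩
  have he1 : 1 ≤ n.factorization p := hp.factorization_pos_of_dvd hn0 hpn
  have hsplit : (n / p ^ n.factorization p) * p ^ n.factorization p = n :=
    Nat.div_mul_cancel (Nat.ordProj_dvd n p)
  have hcov := Tsum_cover (p ^ n.factorization p) (n / p ^ n.factorization p) n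
  rw [hsplit] at hcov
  have hcast : ((p ^ n.factorization p : ℕ) : GaussianInt)
      = (p : GaussianInt) ^ n.factorization p := by push_cast; rfl
  rw [hcast] at hcov
  have hiff1 := dvd_iff_of_dvd_sub hcov
  have hcop : IsCoprime ((p : GaussianInt) ^ n.factorization p)
      (((n / p ^ n.factorization p : ℕ) : GaussianInt) ^ 2) :=
    IsCoprime.pow (isCoprime_gauss (Nat.coprime_ordCompl hp hn0))
  have hiff2 : (p : GaussianInt) ^ n.factorization p ∣
        ((n / p ^ n.factorization p : ℕ) : GaussianInt) ^ 2 * Tsum (p ^ n.factorization p) n ↔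
      (p : GaussianInt) ^ n.factorization p ∣ Tsum (p ^ n.factorization p) n := by
    constructor
    · intro h; exact hcop.dvd_of_dvd_mul_left h
    · intro h; exact h.mul_left _
  rw [hiff1, hiff2]
  by_cases he2 : 2 ≤ n.factorization p
  · have hdvd : (p : GaussianInt) ^ n.factorization p ∣ Tsum (p ^ n.factorization p) n := by
      obtain ⟨k, hk⟩ : ∃ k, n = k + 1 := ⟨n - 1, by omega⟩
      have := Tsum_dvd_of_two_le p k (n.factorization p) he2
      rwa [← hk] at this
    refine iff_of_true hdvd ?_
    rintro ⟨-, h1, -⟩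
    omega
  · have he' : n.factorization p = 1 := by omega
    rw [he', pow_one, pow_one]
    by_cases hp2 : p = 2
    · subst hp2
      obtain ⟨m, rfl⟩ : ∃ m, n = 2 * m := ⟨n / 2, by omega⟩
      have hdvd : ((2 : ℕ) : GaussianInt) ∣ Tsum 2 (2 * m) := by
        have := case_two m (by omega)
        simpa using this
      refine iff_of_true hdvd ?_
      rintro ⟨h3, -, -⟩
      norm_num at h3
    · have hodd : p % 2 = 1 := Nat.odd_iff.1 (hp.odd_of_ne_two hp2)
      rcases (by omega : p % 4 = 1 ∨ p % 4 = 3) with h4 | h4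
      · have hsq : IsSquare (-1 : ZMod p) := (ZMod.exists_sq_eq_neg_one_iff).2 (by omega)
        obtain ⟨c, hc⟩ := hsq
        have hdvd := dvd_Tsum_of_sq_eq_neg_one hp2 c hc.symm n
        refine iff_of_true hdvd ?_
        rintro ⟨h3, -, -⟩
        omega
      · rw [case_three (p := p) h4 n (by omega)]
        constructor
        · intro hnd
          rintro ⟨-, -, hdd⟩
          exact hnd hdd
        · intro hcon hdd
          exact hcon ⟨h4, rfl, hdd⟩

lemma p3_fac {p : ℕ} (hp : p.Prime) : p ^ 3 - p = p * (p ^ 2 - 1) := by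
  have h2 : 1 ≤ p ^ 2 := Nat.one_le_pow _ _ hp.pos
  have hp3 : p ≤ p ^ 3 := Nat.le_self_pow (by omega) p
  have key : p * (p ^ 2 - 1) + p = p ^ 3 := by
    zify [h2]
    ring
  omega

lemma p3_cop {p : ℕ} (hp : p.Prime) : Nat.Coprime p (p ^ 2 - 1) := by
  have h2 : 1 ≤ p ^ 2 := Nat.one_le_pow _ _ hp.pos
  refine (Nat.Prime.coprime_iff_not_dvd hp).2 fun hd => ?_
  have hs := Nat.dvd_sub (dvd_pow_self p two_ne_zero) hd
  rw [Nat.sub_sub_self h2] at hs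
  have := Nat.le_of_dvd one_pos hs
  have := hp.two_le
  omega

end GsumAux

theorem Gsum_diag_not_zero_mod_iff (n : ℕ) (hn : 1 < n) :
    ¬ (n : GaussianInt) ∣ Gsum n n ↔
      ∃ p : ℕ, p.Prime ∧ p % 4 = 3 ∧ (p ^ 3 - p) ∣ n ∧ ¬ p ^ 2 ∣ n := by
  have hn0 : n ≠ 0 := by omega
  rw [GsumAux.dvd_Gsum_iff n (by omega), GsumAux.dvd_iff_forall_primePow n hn0 _]
  constructor
  · intro h
    push_neg at h
    obtain ⟨p, hpF, hnot⟩ := h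
    have hp := Nat.prime_of_mem_primeFactors hpF
    have hpn := Nat.dvd_of_mem_primeFactors hpF
    have hC : p % 4 = 3 ∧ n.factorization p = 1 ∧ (p ^ 2 - 1) ∣ n := by
      by_contra hC
      exact hnot ((GsumAux.component_iff n p hn hp hpn).2 hC)
    obtain ⟨h4, he1, hdd⟩ := hC
    refine ⟨p, hp, h4, ?_, ?_⟩
    · rw [GsumAux.p3_fac hp]
      exact (GsumAux.p3_cop hp).mul_dvd_of_dvd_of_dvd hpn hdd
    · intro hsq
      have := (Nat.Prime.pow_dvd_iff_le_factorization hp hn0).1 hsq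
      omega
  · rintro ⟨p, hp, h4, hdn, hnsq⟩
    intro hall
    have hpn : p ∣ n := dvd_trans (by rw [GsumAux.p3_fac hp]; exact dvd_mul_right _ _) hdn
    have hdd : (p ^ 2 - 1) ∣ n :=
      dvd_trans (by rw [GsumAux.p3_fac hp]; exact dvd_mul_left _ _) hdn
    have hF : p ∈ n.primeFactors := Nat.mem_primeFactors.2 ⟨hp, hpn, hn0⟩
    have hcomp := hall p hF
    rw [GsumAux.component_iff n p hn hp hpn] at hcomp
    apply hcomp
    refine ⟨h4, ?_, hdd⟩
    have hle1 : 1 ≤ n.factorization p := hp.factorization_pos_of_dvd hn0 hpn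
    have hlt2 : ¬ 2 ≤ n.factorization p := fun hh =>
      hnsq ((Nat.Prime.pow_dvd_iff_le_factorization hp hn0).2 hh)
    omega
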